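/- Let 1 < p < ∞ and let ℓ_1 carry its maximal L_p-quantization (projective tensor norm on L_p ⊗ ℓ_1, with L_p = ℓ_p). Then (ℓ_1)_max is not p-convex: there exist u, v ∈ ℓ_p ⊗ ℓ_1 with orthogonal proper supports such that ‖u + v‖_π > (‖u‖_π^p + ‖v‖_π^p)^{1/p}. -/

import Mathlib

open TensorProduct
open scoped ENNReal Classical

instance : Fact ((1 : ℝ≥0∞) ≤ 1) := ⟨le_rfl⟩

/-- The projective tensor norm on the algebraic tensor product of two normed spaces. -/
noncomputable def projNorm {A B : Type*} [NormedAddCommGroup A] [NormedSpace ℂ A]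
    [NormedAddCommGroup B] [NormedSpace ℂ B] (w : A ⊗[ℂ] B) : ℝ :=
  sInf {r : ℝ | ∃ (n : ℕ) (x : Fin n → A) (y : Fin n → B),
    w = ∑ i, x i ⊗ₜ[ℂ] y i ∧ r = ∑ i, ‖x i‖ * ‖y i‖}

set_option maxHeartbeats 1000000

/-- For `1 < p < ∞`, the maximal `ℓ_p`-quantization of `ℓ_1` (projective
norm on `ℓ_p ⊗ ℓ_1`) is not `p`-convex: there are `u, v` with orthogonal proper
(coordinate) supports violating the `p`-convexity inequality. -/
theorem max_quantization_ell_one_not_p_convex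
    (p : ℝ≥0∞) (hp1 : 1 < p) (hp2 : p < ∞) [Fact (1 ≤ p)]
    -- the coordinate projections on ℓ_p
    (Pc : Set ℕ → (lp (fun _ : ℕ => ℂ) p →L[ℂ] lp (fun _ : ℕ => ℂ) p))
    (hPc : ∀ (S : Set ℕ) (f : lp (fun _ : ℕ => ℂ) p) (k : ℕ),
      (Pc S f) k = if k ∈ S then f k else 0) :
    ∃ (u v : (lp (fun _ : ℕ => ℂ) p) ⊗[ℂ] (lp (fun _ : ℕ => ℂ) 1)) (S T : Set ℕ),
      Disjoint S T ∧
      LinearMap.rTensor (lp (fun _ : ℕ => ℂ) 1)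
        ((Pc S : _ →L[ℂ] _) : _ →ₗ[ℂ] _) u = u ∧
      LinearMap.rTensor (lp (fun _ : ℕ => ℂ) 1)
        ((Pc T : _ →L[ℂ] _) : _ →ₗ[ℂ] _) v = v ∧
      (projNorm u ^ p.toReal + projNorm v ^ p.toReal) ^ (1 / p.toReal)
        < projNorm (u + v) := by
  classical
  have hq1 : 1 < p.toReal := by
    have := (ENNReal.toReal_lt_toReal (by simp) hp2.ne).mpr hp1
    simpa using this
  have hq0 : 0 < p.toReal := zero_lt_one.trans hq1
  have hpne : p ≠ 0 := (zero_lt_one.trans hp1).ne'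
  let e : ℕ → lp (fun _ : ℕ => ℂ) p := fun i => lp.single p i (1 : ℂ)
  let f : ℕ → lp (fun _ : ℕ => ℂ) 1 := fun i => lp.single 1 i (1 : ℂ)
  have hek : ∀ i k : ℕ, (e i) k = if k = i then 1 else 0 := by
    intro i k; simp [e, lp.single_apply, Pi.single_apply]
  have hfk : ∀ i k : ℕ, (f i) k = if k = i then 1 else 0 := by
    intro i k; simp [f, lp.single_apply, Pi.single_apply]
  have hen : ∀ i, ‖e i‖ = 1 := fun i => by
    simpa using lp.norm_single (E := fun _ : ℕ => ℂ) (zero_lt_one.trans hp1) i (1 : ℂ)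
  have hfn : ∀ i, ‖f i‖ = 1 := fun i => by
    simpa [f] using lp.norm_single (E := fun _ : ℕ => ℂ) (p := 1) (by norm_num)
      i (1 : ℂ)
  -- the bilinear functional
  let B : lp (fun _ : ℕ => ℂ) p →ₗ[ℂ] lp (fun _ : ℕ => ℂ) 1 →ₗ[ℂ] ℂ := LinearMap.mk₂ ℂ (fun x y => x 0 * y 0 + x 1 * y 1)
    (by intro m n y; simp [lp.coeFn_add]; ring)
    (by intro c m y; simp [lp.coeFn_smul, Pi.smul_apply, smul_eq_mul]; ring)
    (by intro m n y; simp [lp.coeFn_add]; ring)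
    (by intro c m y; simp [lp.coeFn_smul, Pi.smul_apply, smul_eq_mul]; ring)
  let Φ : (lp (fun _ : ℕ => ℂ) p) ⊗[ℂ] (lp (fun _ : ℕ => ℂ) 1) →ₗ[ℂ] ℂ := TensorProduct.lift B
  have hΦt : ∀ (x : lp (fun _ : ℕ => ℂ) p) (y : lp (fun _ : ℕ => ℂ) 1), Φ (x ⊗ₜ[ℂ] y) = x 0 * y 0 + x 1 * y 1 := by
    intro x y; simp [Φ, B]
  -- nonnegativity and bounds of projNorm
  have hnn : ∀ w : (lp (fun _ : ℕ => ℂ) p) ⊗[ℂ] (lp (fun _ : ℕ => ℂ) 1), 0 ≤ projNorm w := by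
    intro w
    apply Real.sInf_nonneg
    rintro r ⟨n, x, y, -, rfl⟩
    exact Finset.sum_nonneg fun i _ => mul_nonneg (norm_nonneg _) (norm_nonneg _)
  have hbdd : ∀ w : (lp (fun _ : ℕ => ℂ) p) ⊗[ℂ] (lp (fun _ : ℕ => ℂ) 1), BddBelow {r : ℝ | ∃ (n : ℕ) (x : Fin n → lp (fun _ : ℕ => ℂ) p) (y : Fin n → lp (fun _ : ℕ => ℂ) 1),
      w = ∑ i, x i ⊗ₜ[ℂ] y i ∧ r = ∑ i, ‖x i‖ * ‖y i‖} := by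
    intro w
    refine ⟨0, ?_⟩
    rintro r ⟨n, x, y, -, rfl⟩
    exact Finset.sum_nonneg fun i _ => mul_nonneg (norm_nonneg _) (norm_nonneg _)
  have hle : ∀ i j : ℕ, projNorm (e i ⊗ₜ[ℂ] f j) ≤ 1 := by
    intro i j
    apply csInf_le (hbdd _)
    exact ⟨1, fun _ => e i, fun _ => f j, by simp, by simp [hen, hfn]⟩
  -- lower bound for projNorm (u + v)
  have key : (2 : ℝ) ≤ projNorm (e 0 ⊗ₜ[ℂ] f 0 + e 1 ⊗ₜ[ℂ] f 1) := by
    apply le_csInf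
    · exact ⟨‖e 0‖ * ‖f 0‖ + ‖e 1‖ * ‖f 1‖, 2, ![e 0, e 1], ![f 0, f 1],
        by simp [Fin.sum_univ_two], by simp [Fin.sum_univ_two]⟩
    rintro r ⟨n, x, y, hw, rfl⟩
    have hΦuv : Φ (e 0 ⊗ₜ[ℂ] f 0 + e 1 ⊗ₜ[ℂ] f 1) = 2 := by
      rw [map_add, hΦt, hΦt, hek, hek, hek, hek, hfk, hfk, hfk, hfk]
      norm_num
    have hΦs : Φ (e 0 ⊗ₜ[ℂ] f 0 + e 1 ⊗ₜ[ℂ] f 1)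
        = ∑ i, (x i 0 * y i 0 + x i 1 * y i 1) := by
      rw [hw, map_sum]
      exact Finset.sum_congr rfl fun i _ => hΦt _ _
    have hterm : ∀ i : Fin n, ‖x i 0 * y i 0 + x i 1 * y i 1‖ ≤ ‖x i‖ * ‖y i‖ := by
      intro i
      have hy : ‖y i 0‖ + ‖y i 1‖ ≤ ‖y i‖ := by
        have := lp.sum_rpow_le_norm_rpow (E := fun _ : ℕ => ℂ) (p := 1)
          (by norm_num) (y i) ({0, 1} : Finset ℕ)
        simpa [Finset.sum_pair (by norm_num : (0 : ℕ) ≠ 1)] using this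
      have hx0 : ‖x i 0‖ ≤ ‖x i‖ := lp.norm_apply_le_norm hpne (x i) 0
      have hx1 : ‖x i 1‖ ≤ ‖x i‖ := lp.norm_apply_le_norm hpne (x i) 1
      calc ‖x i 0 * y i 0 + x i 1 * y i 1‖
          ≤ ‖x i 0‖ * ‖y i 0‖ + ‖x i 1‖ * ‖y i 1‖ := by
            refine (norm_add_le _ _).trans ?_
            simp [norm_mul]
        _ ≤ ‖x i‖ * ‖y i 0‖ + ‖x i‖ * ‖y i 1‖ := by
            exact add_le_add (mul_le_mul_of_nonneg_right hx0 (norm_nonneg _))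
              (mul_le_mul_of_nonneg_right hx1 (norm_nonneg _))
        _ = ‖x i‖ * (‖y i 0‖ + ‖y i 1‖) := by ring
        _ ≤ ‖x i‖ * ‖y i‖ := mul_le_mul_of_nonneg_left hy (norm_nonneg _)
    calc (2 : ℝ) = ‖(2 : ℂ)‖ := by norm_num
      _ = ‖∑ i, (x i 0 * y i 0 + x i 1 * y i 1)‖ := by rw [← hΦs, hΦuv]
      _ ≤ ∑ i, ‖x i 0 * y i 0 + x i 1 * y i 1‖ := norm_sum_le _ _
      _ ≤ ∑ i, ‖x i‖ * ‖y i‖ := Finset.sum_le_sum fun i _ => hterm i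
  -- supports
  have hsupp : ∀ i : ℕ, Pc {i} (e i) = e i := by
    intro i
    apply lp.ext
    funext k
    rw [hPc]
    by_cases h : k = i <;> simp [hek, h]
  refine ⟨e 0 ⊗ₜ[ℂ] f 0, e 1 ⊗ₜ[ℂ] f 1, {0}, {1}, by simp, ?_, ?_, ?_⟩
  · rw [LinearMap.rTensor_tmul, ContinuousLinearMap.coe_coe, hsupp]
  · rw [LinearMap.rTensor_tmul, ContinuousLinearMap.coe_coe, hsupp]
  · have h1 : projNorm (e 0 ⊗ₜ[ℂ] f 0) ^ p.toReal ≤ 1 :=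
      Real.rpow_le_one (hnn _) (hle 0 0) hq0.le
    have h2 : projNorm (e 1 ⊗ₜ[ℂ] f 1) ^ p.toReal ≤ 1 :=
      Real.rpow_le_one (hnn _) (hle 1 1) hq0.le
    have hnn1 : 0 ≤ projNorm (e 0 ⊗ₜ[ℂ] f 0) ^ p.toReal := Real.rpow_nonneg (hnn _) _
    have hnn2 : 0 ≤ projNorm (e 1 ⊗ₜ[ℂ] f 1) ^ p.toReal := Real.rpow_nonneg (hnn _) _
    calc (projNorm (e 0 ⊗ₜ[ℂ] f 0) ^ p.toReal + projNorm (e 1 ⊗ₜ[ℂ] f 1) ^ p.toReal)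
          ^ (1 / p.toReal)
        ≤ (2 : ℝ) ^ (1 / p.toReal) :=
          Real.rpow_le_rpow (by linarith) (by linarith) (by positivity)
      _ < (2 : ℝ) ^ (1 : ℝ) :=
          Real.rpow_lt_rpow_of_exponent_lt one_lt_two ((div_lt_one hq0).mpr hq1)
      _ = 2 := Real.rpow_one 2
      _ ≤ projNorm (e 0 ⊗ₜ[ℂ] f 0 + e 1 ⊗ₜ[ℂ] f 1) := key
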